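/- arXiv:2301.08886 — 3 statements merged into one kernel-verified Lean document; each statement's English description precedes it below -/
import Mathlib

section
/- Let d ≥ 0 and let V be a nondegenerate k/κ-hermitian space of dimension 2d+1. Let W ⊆ V be a special subspace of codimension r (so dim W = 2d+1−r, 0 ≤ r ≤ d), let π : W → W/W⊥ be the quotient map, and equip W/W⊥ with the induced nondegenerate hermitian form h̄ satisfying h̄(π(x),π(y)) = (x,y). Then the map U ↦ π(U) is a bijection from the set {U ⊆ V : dim U = d+1, U⊥ ⊆ U, U ⊆ W} onto the set {Ū ⊆ W/W⊥ : dim Ū = d+1−r, Ū⊥ ⊆ Ū}, where in the target the orthogonal complement Ū⊥ is taken inside W/W⊥ with respect to h̄; its inverse is Ū ↦ π^{−1}(Ū). -/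
open Module

variable {k : Type*} [Field k] {V : Type*} [AddCommGroup V] [Module k V]

/-- The orthogonal complement `U⊥ = {x : (x, u) = 0 for all u ∈ U}` of a subspace with
respect to a sesquilinear form (linear in the first variable). -/
def perp {k V : Type*} [Field k] [AddCommGroup V] [Module k V]
    {σ : k →+* k} (h : V →ₗ[k] V →ₛₗ[σ] k) (U : Submodule k V) : Submodule k V where
  carrier := {x | ∀ u ∈ U, h x u = 0}
  add_mem' := by
    intro x y hx hy u hu
    simp [hx u hu, hy u hu]
  zero_mem' := by
    intro u hu
    simp
  smul_mem' := by
    intro a x hx u hu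
    simp [hx u hu]

theorem mem_perp' {σ : k →+* k} (h : V →ₗ[k] V →ₛₗ[σ] k) {U : Submodule k V} {x : V} :
    x ∈ perp h U ↔ ∀ u ∈ U, h x u = 0 := Iff.rfl

theorem perp_antitone' {σ : k →+* k} (h : V →ₗ[k] V →ₛₗ[σ] k) {U₁ U₂ : Submodule k V}
    (hle : U₁ ≤ U₂) : perp h U₂ ≤ perp h U₁ := fun _ hx u hu => hx u (hle hu)

theorem finrank_semilinearDual' [Fintype k] {σ : k →+* k} (hσ2 : ∀ x : k, σ (σ x) = x)
    [FiniteDimensional k V] : finrank k (V →ₛₗ[σ] k) = finrank k V := by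
  have hfin : Finite V := Module.finite_of_finite k
  have : Fintype V := Fintype.ofFinite V
  have : Finite (V →ₛₗ[σ] k) := Finite.of_injective _ DFunLike.coe_injective
  have : Fintype (V →ₛₗ[σ] k) := Fintype.ofFinite _
  have : Finite (Module.Dual k V) := Finite.of_injective _ DFunLike.coe_injective
  have : Fintype (Module.Dual k V) := Fintype.ofFinite _
  -- equivalence with the ordinary dual
  have E : (V →ₛₗ[σ] k) ≃ Module.Dual k V :=
    { toFun := fun g =>
        { toFun := fun x => σ (g x)
          map_add' := fun x y => by simp [map_add]
          map_smul' := fun c x => by simp [g.map_smulₛₗ, hσ2, map_mul] }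
      invFun := fun ψ =>
        { toFun := fun x => σ (ψ x)
          map_add' := fun x y => by simp [map_add]
          map_smul' := fun c x => by simp [map_mul] }
      left_inv := fun g => by ext x; simp [hσ2]
      right_inv := fun ψ => by ext x; simp [hσ2] }
  have hcardeq : Fintype.card (V →ₛₗ[σ] k) = Fintype.card (Module.Dual k V) :=
    Fintype.card_congr E
  have e1 : Fintype.card (V →ₛₗ[σ] k) = Fintype.card k ^ finrank k (V →ₛₗ[σ] k) :=
    card_eq_pow_finrank (K := k)
  have e2 : Fintype.card (Module.Dual k V) = Fintype.card k ^ finrank k (Module.Dual k V) :=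
    card_eq_pow_finrank (K := k)
  have h2 : 1 < Fintype.card k := Fintype.one_lt_card
  have := Nat.pow_right_injective h2 (e1 ▸ e2 ▸ hcardeq)
  rw [this, Subspace.dual_finrank_eq]

theorem perp_finrank_add' [Fintype k] {σ : k →+* k} (hσ2 : ∀ x : k, σ (σ x) = x)
    [FiniteDimensional k V]
    (h : V →ₗ[k] V →ₛₗ[σ] k) (hnd : ∀ x : V, (∀ y : V, h x y = 0) → x = 0)
    (U : Submodule k V) : finrank k (perp h U) + finrank k U = finrank k V := by
  classical
  have hfinV : Finite V := Module.finite_of_finite k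
  have hfinD : Finite (V →ₛₗ[σ] k) := Finite.of_injective _ DFunLike.coe_injective
  have hfdD : FiniteDimensional k (V →ₛₗ[σ] k) := Module.Finite.of_finite
  -- the restriction of `h` to functionals on `U`
  let f' : V →ₗ[k] (U →ₛₗ[σ] k) :=
    { toFun := fun x => (h x).comp U.subtype
      map_add' := fun x y => by ext u; simp
      map_smul' := fun c x => by ext u; simp }
  have hker : LinearMap.ker f' = perp h U := by
    ext x
    simp only [LinearMap.mem_ker, mem_perp']
    constructor
    · intro hx u hu
      have := congrArg (fun g => g ⟨u, hu⟩) hx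
      simpa [f'] using this
    · intro hx
      ext u
      simpa [f'] using hx u u.2
  -- `h` is injective, hence surjective onto the semilinear dual
  have hinj : LinearMap.ker h = ⊥ := by
    rw [LinearMap.ker_eq_bot']
    intro x hx
    exact hnd x fun y => by rw [hx]; rfl
  have hrange : LinearMap.range h = ⊤ := by
    apply Submodule.eq_top_of_finrank_eq
    have := LinearMap.finrank_range_add_finrank_ker h
    rw [hinj, finrank_bot] at this
    rw [finrank_semilinearDual' hσ2]
    omega
  have hsurjh : Function.Surjective h := LinearMap.range_eq_top.mp hrange
  -- `f'` is surjective
  have hsurj : Function.Surjective f' := by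
    intro φ
    let ψ0 : Module.Dual k U :=
      { toFun := fun u => σ (φ u)
        map_add' := fun x y => by simp [map_add]
        map_smul' := fun c x => by simp [φ.map_smulₛₗ, hσ2, map_mul] }
    obtain ⟨ψ, hψ⟩ := Subspace.dualRestrict_surjective (W := U) ψ0
    let g : V →ₛₗ[σ] k :=
      { toFun := fun x => σ (ψ x)
        map_add' := fun x y => by simp [map_add]
        map_smul' := fun c x => by simp [map_mul] }
    obtain ⟨x, hx⟩ := hsurjh g
    refine ⟨x, ?_⟩
    ext u
    have h1 : ψ (u : V) = σ (φ u) := by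
      have := congrArg (fun F => F u) hψ
      simpa [Submodule.dualRestrict_apply, ψ0] using this
    simp [f', hx, g, h1, hσ2]
  have hrank := LinearMap.finrank_range_add_finrank_ker f'
  rw [hker, LinearMap.range_eq_top.mpr hsurj, finrank_top] at hrank
  rw [finrank_semilinearDual' hσ2 (V := U)] at hrank
  omega

theorem perp_perp' [Fintype k] {σ : k →+* k} (hσ2 : ∀ x : k, σ (σ x) = x)
    [FiniteDimensional k V]
    (h : V →ₗ[k] V →ₛₗ[σ] k) (hherm : ∀ x y : V, h x y = σ (h y x))
    (hnd : ∀ x : V, (∀ y : V, h x y = 0) → x = 0)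
    (U : Submodule k V) : perp h (perp h U) = U := by
  have hle : U ≤ perp h (perp h U) := by
    intro x hx z hz
    rw [hherm, hz x hx, map_zero]
  have h1 := perp_finrank_add' hσ2 h hnd U
  have h2 := perp_finrank_add' hσ2 h hnd (perp h U)
  have h3 : finrank k U ≤ finrank k V := Submodule.finrank_le U
  exact (Submodule.eq_of_le_of_finrank_le hle (by omega)).symm

theorem finrank_map_mkQ_add' {M : Type*} [AddCommGroup M] [Module k M] [FiniteDimensional k M]
    (N X : Submodule k M) (hNX : N ≤ X) :
    finrank k (X.map N.mkQ) + finrank k N = finrank k X := by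
  have hrange : LinearMap.range (N.mkQ.comp X.subtype) = X.map N.mkQ := by
    rw [LinearMap.range_comp, Submodule.range_subtype]
  have hker : LinearMap.ker (N.mkQ.comp X.subtype) = N.comap X.subtype := by
    rw [LinearMap.ker_comp, Submodule.ker_mkQ]
  have h1 := LinearMap.finrank_range_add_finrank_ker (N.mkQ.comp X.subtype)
  rwa [hrange, hker, (Submodule.comapSubtypeEquivOfLe hNX).finrank_eq] at h1

/-- Let `V` be a nondegenerate `k/κ`-hermitian space of dimension `2d+1`
and `W ⊆ V` a special subspace of codimension `r`, with quotient map `π : W → W/W⊥` and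
induced nondegenerate hermitian form `h̄` on `W/W⊥`. Then `U ↦ π(U)` is a bijection from
`{U : dim U = d+1, U⊥ ⊆ U, U ⊆ W}` onto `{Ū ⊆ W/W⊥ : dim Ū = d+1-r, Ū⊥ ⊆ Ū}`, with
inverse `Ū ↦ π⁻¹(Ū)`. -/
theorem special_cycle_bijOn (q d r : ℕ) (hr : r ≤ d)
    [Fintype k] (hcard : Fintype.card k = q ^ 2)
    [FiniteDimensional k V] (hdim : finrank k V = 2 * d + 1)
    (σ : k →+* k) (hσ : ∀ x : k, σ x = x ^ q)
    (h : V →ₗ[k] V →ₛₗ[σ] k)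
    (hherm : ∀ x y : V, h x y = σ (h y x))
    (hnd : ∀ x : V, (∀ y : V, h x y = 0) → x = 0)
    (W : Submodule k V) (hW : perp h W ≤ W) (hWdim : finrank k W = 2 * d + 1 - r)
    (hb : (W ⧸ (perp h W).comap W.subtype) →ₗ[k]
          (W ⧸ (perp h W).comap W.subtype) →ₛₗ[σ] k)
    (hbcompat : ∀ x y : W,
      hb (Submodule.Quotient.mk x) (Submodule.Quotient.mk y) = h (x : V) (y : V)) :
    Set.BijOn
      (fun U : Submodule k V => (U.comap W.subtype).map ((perp h W).comap W.subtype).mkQ)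
      {U : Submodule k V | finrank k U = d + 1 ∧ perp h U ≤ U ∧ U ≤ W}
      {Ub : Submodule k (W ⧸ (perp h W).comap W.subtype) |
        finrank k Ub = d + 1 - r ∧ perp hb Ub ≤ Ub} ∧
    Set.InvOn
      (fun Ub : Submodule k (W ⧸ (perp h W).comap W.subtype) =>
        (Ub.comap ((perp h W).comap W.subtype).mkQ).map W.subtype)
      (fun U : Submodule k V => (U.comap W.subtype).map ((perp h W).comap W.subtype).mkQ)
      {U : Submodule k V | finrank k U = d + 1 ∧ perp h U ≤ U ∧ U ≤ W}
      {Ub : Submodule k (W ⧸ (perp h W).comap W.subtype) |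
        finrank k Ub = d + 1 - r ∧ perp hb Ub ≤ Ub} := by
  classical
  have hσ2 : ∀ x : k, σ (σ x) = x := by
    intro x
    rw [hσ, hσ, ← pow_mul, ← sq, ← hcard]
    exact FiniteField.pow_card x
  -- dimension of `W⊥`
  have hPW := perp_finrank_add' hσ2 h hnd W
  rw [hdim, hWdim] at hPW
  have hPrank : finrank k (perp h W) = r := by omega
  have hNrank : finrank k ((perp h W).comap W.subtype) = r :=
    (Submodule.comapSubtypeEquivOfLe hW).finrank_eq.trans hPrank
  -- double perp
  have hWpp : perp h (perp h W) = W := perp_perp' hσ2 h hherm hnd W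
  have hmapsF : Set.MapsTo
      (fun U : Submodule k V => (U.comap W.subtype).map ((perp h W).comap W.subtype).mkQ)
      {U : Submodule k V | finrank k U = d + 1 ∧ perp h U ≤ U ∧ U ≤ W}
      {Ub : Submodule k (W ⧸ (perp h W).comap W.subtype) |
        finrank k Ub = d + 1 - r ∧ perp hb Ub ≤ Ub} := by
    rintro U ⟨hUdim, hUperp, hUW⟩
    have hPU : perp h W ≤ U := le_trans (perp_antitone' h hUW) hUperp
    have hNle : (perp h W).comap W.subtype ≤ U.comap W.subtype := fun x hx => hPU hx
    refine ⟨?_, ?_⟩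
    · show finrank k ((U.comap W.subtype).map ((perp h W).comap W.subtype).mkQ) = d + 1 - r
      have h1 := finrank_map_mkQ_add' ((perp h W).comap W.subtype) (U.comap W.subtype) hNle
      have h2 : finrank k (U.comap W.subtype) = finrank k U :=
        (Submodule.comapSubtypeEquivOfLe hUW).finrank_eq
      rw [h2, hUdim, hNrank] at h1
      omega
    · show perp hb ((U.comap W.subtype).map ((perp h W).comap W.subtype).mkQ) ≤
        (U.comap W.subtype).map ((perp h W).comap W.subtype).mkQ
      intro z hz
      obtain ⟨y, rfl⟩ := ((perp h W).comap W.subtype).mkQ_surjective z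
      have hyU : (y : V) ∈ U := by
        apply hUperp
        intro u hu
        have huW : u ∈ W := hUW hu
        have hmem : ((perp h W).comap W.subtype).mkQ ⟨u, huW⟩ ∈
            (U.comap W.subtype).map ((perp h W).comap W.subtype).mkQ :=
          Submodule.mem_map_of_mem (by exact hu)
        have h0 := hz _ hmem
        rwa [Submodule.mkQ_apply, Submodule.mkQ_apply, hbcompat] at h0
      exact Submodule.mem_map_of_mem hyU
  have hmapsG : Set.MapsTo
      (fun Ub : Submodule k (W ⧸ (perp h W).comap W.subtype) =>
        (Ub.comap ((perp h W).comap W.subtype).mkQ).map W.subtype)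
      {Ub : Submodule k (W ⧸ (perp h W).comap W.subtype) |
        finrank k Ub = d + 1 - r ∧ perp hb Ub ≤ Ub}
      {U : Submodule k V | finrank k U = d + 1 ∧ perp h U ≤ U ∧ U ≤ W} := by
    rintro Ub ⟨hUbdim, hUbperp⟩
    have hUW : (Ub.comap ((perp h W).comap W.subtype).mkQ).map W.subtype ≤ W :=
      Submodule.map_subtype_le _ _
    have hNle : (perp h W).comap W.subtype ≤ Ub.comap ((perp h W).comap W.subtype).mkQ := by
      intro x hx
      show ((perp h W).comap W.subtype).mkQ x ∈ Ub
      have hz : ((perp h W).comap W.subtype).mkQ x = 0 := by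
        rw [Submodule.mkQ_apply, Submodule.Quotient.mk_eq_zero]
        exact hx
      rw [hz]
      exact Ub.zero_mem
    have hPU : perp h W ≤ (Ub.comap ((perp h W).comap W.subtype).mkQ).map W.subtype := by
      intro x hx
      have hxW : x ∈ W := hW hx
      exact ⟨⟨x, hxW⟩, hNle hx, rfl⟩
    refine ⟨?_, ?_, hUW⟩
    · show finrank k ((Ub.comap ((perp h W).comap W.subtype).mkQ).map W.subtype) = d + 1
      have h1 := finrank_map_mkQ_add' ((perp h W).comap W.subtype)
        (Ub.comap ((perp h W).comap W.subtype).mkQ) hNle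
      rw [Submodule.map_comap_eq_of_surjective
        ((perp h W).comap W.subtype).mkQ_surjective, hUbdim, hNrank] at h1
      have h2 : finrank k ((Ub.comap ((perp h W).comap W.subtype).mkQ).map W.subtype) =
          finrank k (Ub.comap ((perp h W).comap W.subtype).mkQ) :=
        Submodule.finrank_map_subtype_eq W _
      omega
    · show perp h ((Ub.comap ((perp h W).comap W.subtype).mkQ).map W.subtype) ≤
        (Ub.comap ((perp h W).comap W.subtype).mkQ).map W.subtype
      intro x hx
      have hxW : x ∈ W := by
        rw [← hWpp]
        exact perp_antitone' h hPU hx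
      have hq : ((perp h W).comap W.subtype).mkQ ⟨x, hxW⟩ ∈ perp hb Ub := by
        intro ub hub
        have hub' : ub ∈ (Ub.comap ((perp h W).comap W.subtype).mkQ).map
            ((perp h W).comap W.subtype).mkQ := by
          rw [Submodule.map_comap_eq_of_surjective ((perp h W).comap W.subtype).mkQ_surjective]
          exact hub
        obtain ⟨u, hu, rfl⟩ := hub'
        rw [Submodule.mkQ_apply, Submodule.mkQ_apply, hbcompat]
        exact hx u ⟨u, hu, rfl⟩
      exact ⟨⟨x, hxW⟩, hUbperp hq, rfl⟩
  have hleft : Set.LeftInvOn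
      (fun Ub : Submodule k (W ⧸ (perp h W).comap W.subtype) =>
        (Ub.comap ((perp h W).comap W.subtype).mkQ).map W.subtype)
      (fun U : Submodule k V => (U.comap W.subtype).map ((perp h W).comap W.subtype).mkQ)
      {U : Submodule k V | finrank k U = d + 1 ∧ perp h U ≤ U ∧ U ≤ W} := by
    rintro U ⟨hUdim, hUperp, hUW⟩
    have hPU : perp h W ≤ U := le_trans (perp_antitone' h hUW) hUperp
    show ((((U.comap W.subtype).map ((perp h W).comap W.subtype).mkQ)).comap
      ((perp h W).comap W.subtype).mkQ).map W.subtype = U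
    rw [Submodule.comap_map_mkQ, Submodule.map_sup, Submodule.map_comap_subtype,
      Submodule.map_comap_subtype, inf_eq_right.mpr hW, inf_eq_right.mpr hUW,
      sup_eq_right.mpr hPU]
  have hright : Set.RightInvOn
      (fun Ub : Submodule k (W ⧸ (perp h W).comap W.subtype) =>
        (Ub.comap ((perp h W).comap W.subtype).mkQ).map W.subtype)
      (fun U : Submodule k V => (U.comap W.subtype).map ((perp h W).comap W.subtype).mkQ)
      {Ub : Submodule k (W ⧸ (perp h W).comap W.subtype) |
        finrank k Ub = d + 1 - r ∧ perp hb Ub ≤ Ub} := by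
    rintro Ub _
    show (((Ub.comap ((perp h W).comap W.subtype).mkQ).map W.subtype).comap
      W.subtype).map ((perp h W).comap W.subtype).mkQ = Ub
    rw [Submodule.comap_map_eq, Submodule.ker_subtype, sup_bot_eq,
      Submodule.map_comap_eq_of_surjective ((perp h W).comap W.subtype).mkQ_surjective]
  exact ⟨Set.InvOn.bijOn ⟨hleft, hright⟩ hmapsF hmapsG, ⟨hleft, hright⟩⟩
end

section
/- Let F be a field, d ≥ 1, n = 2d+1, and let V be an n-dimensional F-vector space. Let V_• and W_• be two transverse complete flags in V. Let a = (a_1,…,a_d) be integers with d+1 ≥ a_1 ≥ ⋯ ≥ a_d ≥ 0 and b = (b_1,…,b_{d+1}) integers with d ≥ b_1 ≥ ⋯ ≥ b_{d+1} ≥ 0, and assume |a| + |b| = d(d+2), where |a| = a_1+⋯+a_d and |b| = b_1+⋯+b_{d+1}. Set V^{(i)} = V_{n−d+i−a_i} for i = 1,…,d and W^{(i)} = W_{n−(d+1)+i−b_i} for i = 1,…,d+1. Then the set of pairs (U_d, U_{d+1}) of subspaces of V with U_d ⊆ U_{d+1}, dim U_d = d, dim U_{d+1} = d+1, dim(U_d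 ∩ V^{(i)}) ≥ i for i = 1,…,d, and dim(U_{d+1} ∩ W^{(i)}) ≥ i for i = 1,…,d+1, is nonempty if and only if b_1 = d and b_i = d+1−a_{d+2−i} for i = 2,…,d+1; and in that case this set consists of exactly one pair, namely U_d = Σ_{i=2}^{d+1} (W^{(i)} ∩ V^{(d+2−i)}) and U_{d+1} = U_d + W^{(1)}. -/
open Module

set_option maxHeartbeats 1600000

section aux
variable {F V : Type*} [Field F] [AddCommGroup V] [Module F V] [FiniteDimensional F V]

lemma aux_inf_lower (s t : Submodule F V) :
    finrank F s + finrank F t ≤ finrank F V + finrank F ↥(s ⊓ t) := by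
  have h1 := Submodule.finrank_sup_add_finrank_inf_eq s t
  have h2 : finrank F ↥(s ⊔ t) ≤ finrank F V := Submodule.finrank_le _
  omega

lemma aux_rank_sup_chain {m : ℕ} (M A B : Fin m → Submodule F V)
    (h1 : ∀ j, finrank F (M j) = 1)
    (hA : ∀ j, M j ≤ A j) (hB : ∀ j, M j ≤ B j)
    (hAmono : ∀ i j : Fin m, i.val ≤ j.val → A i ≤ A j)
    (hdisj : ∀ j k : Fin m, j.val < k.val → A j ⊓ B k = ⊥) :
    finrank F ↥(⨆ j, M j) = m := by
  have key : ∀ k : ℕ, k ≤ m →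
      finrank F ↥(⨆ j : Fin m, ⨆ _ : j.val < k, M j) = k := by
    intro k
    induction k with
    | zero =>
      intro _
      have : (⨆ j : Fin m, ⨆ _ : j.val < 0, M j) = ⊥ := by
        apply le_bot_iff.mp
        exact iSup_le fun j => iSup_le fun h => absurd h (Nat.not_lt_zero _)
      rw [this, finrank_bot]
    | succ k ih =>
      intro hk
      have hk' : k < m := hk
      have hstep : (⨆ j : Fin m, ⨆ _ : j.val < k + 1, M j)
          = (⨆ j : Fin m, ⨆ _ : j.val < k, M j) ⊔ M ⟨k, hk'⟩ := by
        apply le_antisymm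
        · refine iSup_le fun j => iSup_le fun hj => ?_
          rcases Nat.lt_succ_iff_lt_or_eq.mp hj with h | h
          · exact le_sup_of_le_left (le_iSup_of_le j (le_iSup_of_le h le_rfl))
          · have : j = ⟨k, hk'⟩ := Fin.ext h
            rw [this]; exact le_sup_right
        · refine sup_le (iSup_le fun j => iSup_le fun hj =>
            le_iSup_of_le j (le_iSup_of_le (Nat.lt_succ_of_lt hj) le_rfl)) ?_
          exact le_iSup_of_le ⟨k, hk'⟩ (le_iSup_of_le (Nat.lt_succ_self k) le_rfl)
      have hbotinf : (⨆ j : Fin m, ⨆ _ : j.val < k, M j) ⊓ M ⟨k, hk'⟩ = ⊥ := by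
        rcases Nat.eq_zero_or_pos k with h0 | hpos
        · subst h0
          have : (⨆ j : Fin m, ⨆ _ : j.val < 0, M j) = ⊥ := by
            apply le_bot_iff.mp
            exact iSup_le fun j => iSup_le fun h => absurd h (Nat.not_lt_zero _)
          rw [this, bot_inf_eq]
        · have hlek : (⨆ j : Fin m, ⨆ _ : j.val < k, M j) ≤ A ⟨k - 1, by omega⟩ := by
            refine iSup_le fun j => iSup_le fun hj => (hA j).trans (hAmono _ _ ?_)
            simp only []
            omega
          apply le_bot_iff.mp
          calc (⨆ j : Fin m, ⨆ _ : j.val < k, M j) ⊓ M ⟨k, hk'⟩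
              ≤ A ⟨k - 1, by omega⟩ ⊓ B ⟨k, hk'⟩ := inf_le_inf hlek (hB _)
            _ = ⊥ := hdisj _ _ (by simp only []; omega)
      have := Submodule.finrank_sup_add_finrank_inf_eq
        (⨆ j : Fin m, ⨆ _ : j.val < k, M j) (M ⟨k, hk'⟩)
      rw [hbotinf, finrank_bot, ih (le_of_lt hk'), h1] at this
      rw [hstep]
      omega
  have hfin : (⨆ j, M j) = ⨆ j : Fin m, ⨆ _ : j.val < m, M j := by
    apply le_antisymm
    · exact iSup_le fun j => le_iSup_of_le j (le_iSup_of_le j.isLt le_rfl)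
    · exact iSup_le fun j => iSup_le fun _ => le_iSup M j
  rw [hfin, key m le_rfl]

end aux

/-- The set of pairs `(U_d, U_{d+1})` of nested subspaces of dimensions `d` and `d+1`
lying in the Schubert cycles `Σ_a(V_•)` and `Σ_b(W_•)` respectively, where
`V^{(i)} = V_{n-d+i-a_i}` and `W^{(i)} = W_{n-(d+1)+i-b_i}` with `n = 2d+1`. -/
def schubertPairs {F V : Type*} [Field F] [AddCommGroup V] [Module F V]
    (d : ℕ) (Vf Wf : ℕ → Submodule F V) (a : Fin d → ℕ) (b : Fin (d + 1) → ℕ) :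
    Set (Submodule F V × Submodule F V) :=
  {p | p.1 ≤ p.2 ∧ finrank F p.1 = d ∧ finrank F p.2 = d + 1 ∧
    (∀ i : Fin d, i.val + 1 ≤ finrank F ↥(p.1 ⊓ Vf (d + 2 + i.val - a i))) ∧
    (∀ i : Fin (d + 1), i.val + 1 ≤ finrank F ↥(p.2 ⊓ Wf (d + 1 + i.val - b i)))}

/-- For transverse complete flags `V_•, W_•` in a `(2d+1)`-dimensional
space and Young-diagram indices `a ⊆ d × (d+1)`, `b ⊆ (d+1) × d` with `|a| + |b| = d(d+2)`,
the set of flags `(U_d, U_{d+1})` in the corresponding pair of Schubert cycles is nonempty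
iff `b₁ = d` and `b_i = d + 1 - a_{d+2-i}` for `i = 2, …, d+1`, in which case it consists of
the single pair `U_d = Σ_{i=2}^{d+1} (W^{(i)} ∩ V^{(d+2-i)})`, `U_{d+1} = U_d + W^{(1)}`. -/
theorem schubertPairs_nonempty_iff {F V : Type*} [Field F] [AddCommGroup V] [Module F V]
    [FiniteDimensional F V] (d : ℕ) (hd : 1 ≤ d) (hdim : finrank F V = 2 * d + 1)
    (Vf Wf : ℕ → Submodule F V)
    (hVmono : ∀ i j : ℕ, i ≤ j → j ≤ 2 * d + 1 → Vf i ≤ Vf j)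
    (hWmono : ∀ i j : ℕ, i ≤ j → j ≤ 2 * d + 1 → Wf i ≤ Wf j)
    (hVrank : ∀ i ≤ 2 * d + 1, finrank F (Vf i) = i)
    (hWrank : ∀ i ≤ 2 * d + 1, finrank F (Wf i) = i)
    (htrans : ∀ i ≤ 2 * d + 1, Vf i ⊓ Wf (2 * d + 1 - i) = ⊥)
    (a : Fin d → ℕ) (b : Fin (d + 1) → ℕ)
    (haanti : ∀ i j : Fin d, i ≤ j → a j ≤ a i) (habd : ∀ i : Fin d, a i ≤ d + 1)
    (hbanti : ∀ i j : Fin (d + 1), i ≤ j → b j ≤ b i) (hbbd : ∀ i : Fin (d + 1), b i ≤ d)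
    (hsum : (∑ i, a i) + (∑ i, b i) = d * (d + 2)) :
    ((schubertPairs d Vf Wf a b).Nonempty ↔
      (b 0 = d ∧ ∀ i : Fin (d + 1), ∀ hi : 1 ≤ i.val,
        b i = d + 1 - a ⟨d - i.val, by omega⟩)) ∧
    ((b 0 = d ∧ ∀ i : Fin (d + 1), ∀ hi : 1 ≤ i.val,
        b i = d + 1 - a ⟨d - i.val, by omega⟩) →
      schubertPairs d Vf Wf a b =
        {(⨆ i : Fin d,
            (Wf (d + 1 + i.succ.val - b i.succ) ⊓ Vf (d + 2 + i.rev.val - a i.rev)),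
          (⨆ i : Fin d,
            (Wf (d + 1 + i.succ.val - b i.succ) ⊓ Vf (d + 2 + i.rev.val - a i.rev))) ⊔
            Wf (d + 1 - b 0))}) := by
  -- basic flag facts
  have hVW0 : ∀ u v : ℕ, v + u ≤ 2*d+1 → Vf v ⊓ Wf u = ⊥ := by
    intro u v h
    have h1 : Vf v ⊓ Wf u ≤ Vf v ⊓ Wf (2*d+1-v) :=
      inf_le_inf_left _ (hWmono u (2*d+1-v) (by omega) (by omega))
    exact le_bot_iff.mp (h1.trans_eq (htrans v (by omega)))
  have hVW1 : ∀ u v : ℕ, v + u = 2*d+2 → 1 ≤ v → v ≤ 2*d+1 →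
      finrank F ↥(Vf v ⊓ Wf u) = 1 := by
    intro u v h hv1 hv2
    have hu2 : u ≤ 2*d+1 := by omega
    have hlow : 1 ≤ finrank F ↥(Vf v ⊓ Wf u) := by
      have h3 := aux_inf_lower (Vf v) (Wf u)
      rw [hVrank v hv2, hWrank u hu2, hdim] at h3
      omega
    have hup : finrank F ↥(Vf v ⊓ Wf u) ≤ 1 := by
      have hXW : (Vf v ⊓ Wf u) ⊔ Wf (2*d+1-v) ≤ Wf u :=
        sup_le inf_le_right (hWmono _ u (by omega) hu2)
      have hXb : (Vf v ⊓ Wf u) ⊓ Wf (2*d+1-v) = ⊥ := by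
        apply le_bot_iff.mp
        calc (Vf v ⊓ Wf u) ⊓ Wf (2*d+1-v) ≤ Vf v ⊓ Wf (2*d+1-v) :=
              inf_le_inf_right _ inf_le_left
          _ = ⊥ := htrans v hv2
      have h4 := Submodule.finrank_sup_add_finrank_inf_eq (Vf v ⊓ Wf u) (Wf (2*d+1-v))
      rw [hXb, finrank_bot] at h4
      have h5 : finrank F ↥((Vf v ⊓ Wf u) ⊔ Wf (2*d+1-v)) ≤ finrank F ↥(Wf u) :=
        Submodule.finrank_mono hXW
      rw [hWrank u hu2] at h5
      rw [hWrank (2*d+1-v) (by omega)] at h4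
      omega
    omega
  have hVtop : Vf (2*d+1) = ⊤ :=
    Submodule.eq_top_of_finrank_eq (by rw [hVrank _ le_rfl, hdim])
  have hstep2 : ∀ (P Q : Submodule F V) (x y u v : ℕ), P ≤ Q → finrank F ↥Q = d+1 →
      x+1 ≤ finrank F ↥(P ⊓ Vf v) → y+1 ≤ finrank F ↥(Q ⊓ Wf u) → d ≤ x + y →
      1 ≤ finrank F ↥((P ⊓ Vf v) ⊓ (Q ⊓ Wf u)) := by
    intro P Q x y u v hPQ hQ hx hy hxy
    have hsup : (P ⊓ Vf v) ⊔ (Q ⊓ Wf u) ≤ Q := sup_le (inf_le_left.trans hPQ) inf_le_left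
    have hsr := Submodule.finrank_sup_add_finrank_inf_eq (P ⊓ Vf v) (Q ⊓ Wf u)
    have hle : finrank F ↥((P ⊓ Vf v) ⊔ (Q ⊓ Wf u)) ≤ finrank F ↥Q :=
      Submodule.finrank_mono hsup
    omega
  have hsingle : (b 0 = d ∧ ∀ i : Fin (d + 1), ∀ hi : 1 ≤ i.val,
      b i = d + 1 - a ⟨d - i.val, by omega⟩) →
      schubertPairs d Vf Wf a b =
        {(⨆ i : Fin d,
            (Wf (d + 1 + i.succ.val - b i.succ) ⊓ Vf (d + 2 + i.rev.val - a i.rev)),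
          (⨆ i : Fin d,
            (Wf (d + 1 + i.succ.val - b i.succ) ⊓ Vf (d + 2 + i.rev.val - a i.rev))) ⊔
            Wf (d + 1 - b 0))} := by
    rintro ⟨hb0, hbi⟩
    -- a is at least 1 everywhere
    have ha1 : ∀ i : Fin d, 1 ≤ a i := by
      intro i
      have h2 : b ⟨1, by omega⟩ = d + 1 - a ⟨d - 1, by omega⟩ := hbi ⟨1, by omega⟩ (le_refl 1)
      have h3 := hbbd ⟨1, by omega⟩
      have h4 := habd ⟨d - 1, by omega⟩
      have h5 : a ⟨d - 1, by omega⟩ ≤ a i := by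
        apply haanti
        rw [Fin.le_def]
        have := i.isLt
        simp only []
        omega
      omega
    -- the auxiliary sequence
    set aa : ℕ → ℕ := fun k => if h : k < d then a ⟨k, h⟩ else 1 with haadef
    have haaval : ∀ i : Fin d, aa i.val = a i := by
      intro i
      simp only [haadef, i.isLt, dif_pos, Fin.eta]
    have haa1 : ∀ k, 1 ≤ aa k := by
      intro k
      simp only [haadef]
      split
      · exact ha1 _
      · exact le_rfl
    have haabd : ∀ k, aa k ≤ d + 1 := by
      intro k
      simp only [haadef]
      split
      · exact habd _
      · omega
    have haaanti : ∀ s t : ℕ, s ≤ t → aa t ≤ aa s := by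
      intro s t hst
      simp only [haadef]
      split <;> split
      · exact haanti _ _ (by rw [Fin.le_def]; exact hst)
      · rename_i h1 h2
        exact absurd (lt_of_le_of_lt hst h1) h2
      · exact ha1 _
      · exact le_rfl
    set uN : ℕ → ℕ := fun k => k + aa (d - k) with huNdef
    have huNval : ∀ k, uN k = k + aa (d - k) := fun k => rfl
    have huN1 : ∀ k, 1 ≤ uN k := by
      intro k
      have := haa1 (d - k)
      rw [huNval]
      omega
    have huNbd : ∀ k, k ≤ d → uN k ≤ 2*d+1 := by
      intro k hk
      have := haabd (d - k)
      rw [huNval]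
      omega
    have huNstrict : ∀ s t : ℕ, s < t → t ≤ d → uN s < uN t := by
      intro s t h ht
      have h1 : aa (d - s) ≤ aa (d - t) := haaanti (d - t) (d - s) (by omega)
      rw [huNval, huNval]
      omega
    have huNmono : ∀ s t : ℕ, s ≤ t → t ≤ d → uN s ≤ uN t := by
      intro s t h ht
      rcases Nat.lt_or_ge s t with h1 | h1
      · exact le_of_lt (huNstrict s t h1 ht)
      · have : s = t := by omega
        rw [this]
    -- the lines
    set NN : ℕ → Submodule F V := fun k =>
      if k = 0 then Wf 1 else Wf (uN k) ⊓ Vf (2*d+2 - uN k) with hNdef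
    have hN0 : NN 0 = Wf 1 := by simp only [hNdef, if_pos rfl]
    have hNpos : ∀ k, k ≠ 0 → NN k = Wf (uN k) ⊓ Vf (2*d+2 - uN k) := by
      intro k hk
      simp only [hNdef, if_neg hk]
    have huN0 : uN 0 = 1 := by
      rw [huNval]
      simp only [haadef, Nat.sub_zero, lt_irrefl, dif_neg (lt_irrefl d)]
    have hNrank : ∀ k, k ≤ d → finrank F ↥(NN k) = 1 := by
      intro k hk
      rcases Nat.eq_zero_or_pos k with h0 | hpos
      · subst h0
        rw [hN0]
        exact hWrank 1 (by omega)
      · rw [hNpos k (by omega), inf_comm]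
        have h1 := huN1 k
        have h2 := huNbd k hk
        exact hVW1 (uN k) (2*d+2 - uN k) (by omega) (by omega) (by omega)
    have hNW : ∀ k, k ≤ d → NN k ≤ Wf (uN k) := by
      intro k hk
      rcases Nat.eq_zero_or_pos k with h0 | hpos
      · subst h0
        rw [hN0, huN0]
      · rw [hNpos k (by omega)]
        exact inf_le_left
    have hNV : ∀ k, k ≤ d → NN k ≤ Vf (2*d+2 - uN k) := by
      intro k hk
      rcases Nat.eq_zero_or_pos k with h0 | hpos
      · subst h0
        rw [hN0, huN0, show 2*d+2-1 = 2*d+1 by omega, hVtop]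
        exact le_top
      · rw [hNpos k (by omega)]
        exact inf_le_right
    -- rank of sups of lines
    have helper1 : ∀ (m : ℕ) (f : Fin m → ℕ), (∀ t, f t ≤ d) →
        (∀ s t : Fin m, s.val < t.val → uN (f s) < uN (f t)) →
        finrank F ↥(⨆ t : Fin m, NN (f t)) = m := by
      intro m f hfd hf
      refine aux_rank_sup_chain (fun t => NN (f t)) (fun t => Wf (uN (f t)))
        (fun t => Vf (2*d+2 - uN (f t))) (fun t => hNrank (f t) (hfd t))
        (fun t => hNW (f t) (hfd t)) (fun t => hNV (f t) (hfd t)) ?_ ?_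
      · intro s t h
        rcases Nat.lt_or_ge s.val t.val with h1 | h1
        · exact hWmono _ _ (le_of_lt (hf s t h1)) (huNbd (f t) (hfd t))
        · have h2 : s = t := Fin.ext (le_antisymm h h1)
          exact le_of_eq (congrArg (fun z => Wf (uN (f z))) h2)
      · intro s t h
        rw [inf_comm]
        have h1 := hf s t h
        have h2 := huNbd (f t) (hfd t)
        have h3 := huN1 (f s)
        exact hVW0 (uN (f s)) (2*d+2 - uN (f t)) (by omega)
    have helper2 : ∀ (m : ℕ) (f : Fin m → ℕ), (∀ t, f t ≤ d) →
        (∀ s t : Fin m, s.val < t.val → uN (f t) < uN (f s)) →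
        finrank F ↥(⨆ t : Fin m, NN (f t)) = m := by
      intro m f hfd hf
      refine aux_rank_sup_chain (fun t => NN (f t)) (fun t => Vf (2*d+2 - uN (f t)))
        (fun t => Wf (uN (f t))) (fun t => hNrank (f t) (hfd t))
        (fun t => hNV (f t) (hfd t)) (fun t => hNW (f t) (hfd t)) ?_ ?_
      · intro s t h
        rcases Nat.lt_or_ge s.val t.val with h1 | h1
        · have h2 := hf s t h1
          have h3 := huN1 (f t)
          have h4 := huNbd (f s) (hfd s)
          exact hVmono _ _ (by omega) (by omega)
        · have h2 : s = t := Fin.ext (le_antisymm h h1)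
          exact le_of_eq (congrArg (fun z => Vf (2*d+2 - uN (f z))) h2)
      · intro s t h
        have h1 := hf s t h
        have h2 := huNbd (f s) (hfd s)
        have h3 := huN1 (f t)
        exact hVW0 (uN (f t)) (2*d+2 - uN (f s)) (by omega)
    -- index identities
    have haarev : ∀ i : Fin d, aa (d - (i.val+1)) = a i.rev := by
      intro i
      have h : d - (i.val+1) < d := by have := i.isLt; omega
      simp only [haadef, dif_pos h]
      exact congrArg a (Fin.ext rfl)
    have hbsucc : ∀ i : Fin d, b i.succ = d + 1 - a i.rev := by
      intro i
      have h := hbi i.succ (by rw [Fin.val_succ]; omega)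
      rw [h]
      exact congrArg (fun z => d + 1 - z) (congrArg a (Fin.ext rfl))
    have hMN : ∀ i : Fin d,
        (Wf (d + 1 + i.succ.val - b i.succ) ⊓ Vf (d + 2 + i.rev.val - a i.rev))
          = NN (i.val + 1) := by
      intro i
      have hiv := i.isLt
      have h1 : i.succ.val = i.val + 1 := rfl
      have h2 : i.rev.val = d - (i.val + 1) := rfl
      have h3 := hbsucc i
      have h4 := haarev i
      have h5 := ha1 i.rev
      have h6 := habd i.rev
      rw [hNpos (i.val+1) (by omega)]
      have e1 : d + 1 + i.succ.val - b i.succ = uN (i.val+1) := by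
        rw [huNval]
        omega
      have e2 : d + 2 + i.rev.val - a i.rev = 2*d+2 - uN (i.val+1) := by
        rw [huNval]
        omega
      rw [e1, e2]
    have hW1 : d + 1 - b 0 = 1 := by omega
    have hw : ∀ j : Fin (d+1), d + 1 + j.val - b j = uN j.val := by
      intro j
      rcases Nat.eq_zero_or_pos j.val with h0 | hpos
      · have hj : j = 0 := Fin.ext h0
        subst hj
        have h1 : (0 : Fin (d+1)).val = 0 := rfl
        have h2 : aa (d - 0) = 1 := by
          simp only [haadef, Nat.sub_zero, dif_neg (lt_irrefl d)]
        rw [huNval, h1, hb0]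
        omega
      · have hjd : j.val ≤ d := by have := j.isLt; omega
        have h := hbi j (by omega)
        have h4 : aa (d - j.val) = a ⟨d - j.val, by omega⟩ := by
          simp only [haadef, dif_pos (show d - j.val < d by omega)]
        have h5 := habd ⟨d - j.val, by omega⟩
        have h6 := ha1 ⟨d - j.val, by omega⟩
        rw [huNval]
        omega
    -- rewrite the goal in terms of NN
    have hgoal1 : (⨆ i : Fin d,
        (Wf (d + 1 + i.succ.val - b i.succ) ⊓ Vf (d + 2 + i.rev.val - a i.rev)))
          = ⨆ i : Fin d, NN (i.val + 1) := iSup_congr hMN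
    rw [hgoal1, hW1]
    -- structure of the candidate
    have hsupEq : (⨆ i : Fin d, NN (i.val + 1)) ⊔ Wf 1 = ⨆ t : Fin (d+1), NN t.val := by
      apply le_antisymm
      · refine sup_le (iSup_le fun i => ?_) ?_
        · exact le_iSup_of_le i.succ (le_of_eq rfl)
        · exact le_iSup_of_le 0 (le_of_eq hN0.symm)
      · refine iSup_le fun t => ?_
        rcases Nat.eq_zero_or_pos t.val with h0 | hpos
        · have h : NN t.val = Wf 1 := by rw [h0, hN0]
          rw [h]; exact le_sup_right
        · have hlt : t.val - 1 < d := by have := t.isLt; omega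
          have h : NN t.val = NN ((⟨t.val - 1, hlt⟩ : Fin d).val + 1) :=
            congrArg NN (by simp only []; omega)
          rw [h]
          exact le_sup_of_le_left (le_iSup (fun i : Fin d => NN (i.val+1)) ⟨t.val-1, hlt⟩)
    have hUdrank : finrank F ↥(⨆ i : Fin d, NN (i.val+1)) = d :=
      helper1 d (fun i => i.val+1) (fun i => i.isLt)
        (fun s t h => huNstrict (s.val+1) (t.val+1) (by omega) t.isLt)
    have hU1rank : finrank F ↥((⨆ i : Fin d, NN (i.val+1)) ⊔ Wf 1) = d + 1 := by
      rw [hsupEq]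
      exact helper1 (d+1) (fun t => t.val) (fun t => by show t.val ≤ d; have := t.isLt; omega)
        (fun s t h => huNstrict s.val t.val h (by have := t.isLt; omega))
    -- membership of the candidate
    have hmem : ((⨆ i : Fin d, NN (i.val+1)), (⨆ i : Fin d, NN (i.val+1)) ⊔ Wf 1)
        ∈ schubertPairs d Vf Wf a b := by
      refine ⟨le_sup_left, hUdrank, hU1rank, ?_, ?_⟩
      · intro i
        have hQ : finrank F ↥(⨆ t : Fin (i.val+1), NN (d - t.val)) = i.val + 1 :=
          helper2 (i.val+1) (fun t => d - t.val) (fun t => by show d - t.val ≤ d; omega)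
            (fun s t h => huNstrict (d - t.val) (d - s.val)
              (by have := t.isLt; have := i.isLt; omega) (by omega))
        have hle : (⨆ t : Fin (i.val+1), NN (d - t.val))
            ≤ (⨆ i' : Fin d, NN (i'.val+1)) ⊓ Vf (d + 2 + i.val - a i) := by
          refine iSup_le fun t => le_inf ?_ ?_
          · have htlt : d - 1 - t.val < d := by have := i.isLt; have := t.isLt; omega
            refine le_iSup_of_le ⟨d - 1 - t.val, htlt⟩ (le_of_eq (congrArg NN ?_))
            have := i.isLt; have := t.isLt
            simp only []
            omega
          · refine (hNV (d - t.val) (by omega)).trans (hVmono _ _ ?_ ?_)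
            · have h1 : a i ≤ aa t.val := by
                rw [← haaval i]
                exact haaanti t.val i.val (by have := t.isLt; omega)
              have h2 : d - (d - t.val) = t.val := by
                have := t.isLt; have := i.isLt; omega
              have h3 := haabd t.val
              have h4 := habd i
              have h5 := ha1 i
              rw [huNval, h2]
              have := t.isLt; have := i.isLt
              omega
            · have := ha1 i; have := i.isLt; omega
        calc i.val + 1 = finrank F ↥(⨆ t : Fin (i.val+1), NN (d - t.val)) := hQ.symm
          _ ≤ _ := Submodule.finrank_mono hle
      · intro j
        have hjd : j.val ≤ d := by have := j.isLt; omega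
        have hQ : finrank F ↥(⨆ t : Fin (j.val+1), NN t.val) = j.val + 1 :=
          helper1 (j.val+1) (fun t => t.val)
            (fun t => by show t.val ≤ d; have := t.isLt; have := j.isLt; omega)
            (fun s t h => huNstrict s.val t.val h (by have := t.isLt; have := j.isLt; omega))
        have hle : (⨆ t : Fin (j.val+1), NN t.val)
            ≤ ((⨆ i' : Fin d, NN (i'.val+1)) ⊔ Wf 1) ⊓ Wf (d + 1 + j.val - b j) := by
          refine iSup_le fun t => le_inf ?_ ?_
          · rw [hsupEq]
            exact le_iSup_of_le ⟨t.val, by have := t.isLt; omega⟩ (le_of_eq rfl)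
          · rw [hw j]
            refine (hNW t.val (by have := t.isLt; omega)).trans
              (hWmono _ _ (huNmono t.val j.val (by have := t.isLt; omega) hjd) (huNbd j.val hjd))
        calc j.val + 1 = finrank F ↥(⨆ t : Fin (j.val+1), NN t.val) := hQ.symm
          _ ≤ _ := Submodule.finrank_mono hle
    -- uniqueness
    have huniq : ∀ p ∈ schubertPairs d Vf Wf a b,
        p = ((⨆ i : Fin d, NN (i.val+1)), (⨆ i : Fin d, NN (i.val+1)) ⊔ Wf 1) := by
      rintro ⟨P1, P2⟩ ⟨hp1, hp2, hp3, hp4, hp5⟩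
      have hline : ∀ k, 1 ≤ k → k ≤ d → NN k ≤ P1 := by
        intro k hk1 hkd
        have hik : d - k < d := by omega
        have hival : (⟨d - k, hik⟩ : Fin d).val = d - k := rfl
        have hx := hp4 ⟨d - k, hik⟩
        have hmk2 : d - (⟨d - k, hik⟩ : Fin d).val < d + 1 := by omega
        have hy := hp5 ⟨d - (⟨d - k, hik⟩ : Fin d).val, hmk2⟩
        have h1 : 1 ≤ finrank F ↥((P1 ⊓ Vf (d + 2 + (⟨d - k, hik⟩ : Fin d).val - a ⟨d - k, hik⟩))
            ⊓ (P2 ⊓ Wf (d + 1 + (d - (⟨d - k, hik⟩ : Fin d).val) - b ⟨d - (⟨d - k, hik⟩ : Fin d).val, hmk2⟩))) :=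
          hstep2 P1 P2 (d - k) (d - (d - k)) _ _ hp1 hp3 hx hy (by omega)
        have e2 : d + 1 + (d - (⟨d - k, hik⟩ : Fin d).val) - b ⟨d - (⟨d - k, hik⟩ : Fin d).val, hmk2⟩
            = uN k := by
          have h := hw ⟨d - (⟨d - k, hik⟩ : Fin d).val, hmk2⟩
          rw [h]
          exact congrArg uN (show d - (d - k) = k by omega)
        have e1 : d + 2 + (⟨d - k, hik⟩ : Fin d).val - a ⟨d - k, hik⟩ = 2*d+2 - uN k := by
          have h4 : aa (d - k) = a ⟨d - k, hik⟩ := by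
            simp only [haadef, dif_pos hik]
          have h5 := habd ⟨d - k, hik⟩
          have h6 := ha1 ⟨d - k, hik⟩
          rw [huNval]
          omega
        have hsub : (P1 ⊓ Vf (d + 2 + (⟨d - k, hik⟩ : Fin d).val - a ⟨d - k, hik⟩))
            ⊓ (P2 ⊓ Wf (d + 1 + (d - (⟨d - k, hik⟩ : Fin d).val) - b ⟨d - (⟨d - k, hik⟩ : Fin d).val, hmk2⟩))
            ≤ NN k := by
          rw [hNpos k (by omega)]
          calc _ ≤ Vf (d + 2 + (⟨d - k, hik⟩ : Fin d).val - a ⟨d - k, hik⟩)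
              ⊓ Wf (d + 1 + (d - (⟨d - k, hik⟩ : Fin d).val) - b ⟨d - (⟨d - k, hik⟩ : Fin d).val, hmk2⟩) :=
                inf_le_inf inf_le_right inf_le_right
            _ = Wf (uN k) ⊓ Vf (2*d+2 - uN k) := by rw [e1, e2, inf_comm]
        have heq := Submodule.eq_of_le_of_finrank_le hsub (by rw [hNrank k hkd]; exact h1)
        rw [← heq]
        exact inf_le_left.trans inf_le_left
      have hP1 : (⨆ i : Fin d, NN (i.val+1)) ≤ P1 :=
        iSup_le fun i => hline (i.val+1) (by omega) i.isLt
      have hP1eq : (⨆ i : Fin d, NN (i.val+1)) = P1 :=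
        Submodule.eq_of_le_of_finrank_le hP1 (by rw [hp2, hUdrank])
      have hWf1 : Wf 1 ≤ P2 := by
        have h := hp5 0
        have e : d + 1 + (0 : Fin (d+1)).val - b 0 = 1 := by
          have h1 : ((0 : Fin (d+1)).val) = 0 := rfl
          omega
        rw [e] at h
        have h2 : P2 ⊓ Wf 1 = Wf 1 :=
          Submodule.eq_of_le_of_finrank_le inf_le_right (by rw [hWrank 1 (by omega)]; exact h)
        rw [← h2]
        exact inf_le_left
      have hP2 : ((⨆ i : Fin d, NN (i.val+1)) ⊔ Wf 1) ≤ P2 := sup_le (hP1.trans hp1) hWf1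
      have hP2eq : ((⨆ i : Fin d, NN (i.val+1)) ⊔ Wf 1) = P2 :=
        Submodule.eq_of_le_of_finrank_le hP2 (by rw [hp3, hU1rank])
      rw [← hP1eq, ← hP2eq]
    rw [Set.eq_singleton_iff_unique_mem]
    exact ⟨hmem, huniq⟩

  have hforward : (schubertPairs d Vf Wf a b).Nonempty →
      (b 0 = d ∧ ∀ i : Fin (d + 1), ∀ hi : 1 ≤ i.val,
        b i = d + 1 - a ⟨d - i.val, by omega⟩) := by
    have hstep : ∀ (P Q : Submodule F V) (x y u v : ℕ), P ≤ Q → finrank F ↥Q = d+1 →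
        x+1 ≤ finrank F ↥(P ⊓ Vf v) → y+1 ≤ finrank F ↥(Q ⊓ Wf u) → d ≤ x + y →
        2*d+2 ≤ v + u := by
      intro P Q x y u v hPQ hQ hx hy hxy
      by_contra hcon
      push_neg at hcon
      have hbot : (P ⊓ Vf v) ⊓ (Q ⊓ Wf u) = ⊥ := by
        apply le_bot_iff.mp
        calc (P ⊓ Vf v) ⊓ (Q ⊓ Wf u) ≤ Vf v ⊓ Wf u := inf_le_inf inf_le_right inf_le_right
          _ = ⊥ := hVW0 u v (by omega)
      have hsup : (P ⊓ Vf v) ⊔ (Q ⊓ Wf u) ≤ Q := sup_le (inf_le_left.trans hPQ) inf_le_left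
      have hsr := Submodule.finrank_sup_add_finrank_inf_eq (P ⊓ Vf v) (Q ⊓ Wf u)
      have hle : finrank F ↥((P ⊓ Vf v) ⊔ (Q ⊓ Wf u)) ≤ finrank F ↥Q :=
        Submodule.finrank_mono hsup
      rw [hbot, finrank_bot] at hsr
      omega
    rintro ⟨p, hp1, hp2, hp3, hp4, hp5⟩
    have key : ∀ i : Fin d, a i + b ⟨d - i.val, by omega⟩ ≤ d + 1 := by
      intro i
      have hival := i.isLt
      have hai := habd i
      have hmk : d - i.val < d + 1 := Nat.lt_succ_of_le (Nat.sub_le d i.val)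
      have hbj := hbbd ⟨d - i.val, hmk⟩
      have h : 2*d+2 ≤ (d + 2 + i.val - a i) + (d + 1 + (d - i.val) - b ⟨d - i.val, hmk⟩) :=
        hstep p.1 p.2 i.val (d - i.val) _ _ hp1 hp3 (hp4 i)
          (hp5 ⟨d - i.val, hmk⟩) (by show d ≤ i.val + (d - i.val); omega)
      omega
    -- sum manipulations
    have hbrev : ∀ i : Fin d, (⟨d - i.val, by omega⟩ : Fin (d+1)) = i.rev.succ := by
      intro i
      have := i.isLt
      apply Fin.ext
      simp [Fin.val_rev]
      omega
    have hrevbij : Function.Bijective (Fin.rev : Fin d → Fin d) :=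
      Function.Involutive.bijective (fun i => Fin.rev_rev i)
    have hsum1 : ∑ i : Fin d, b (i.rev.succ) = ∑ i : Fin d, b i.succ :=
      Function.Bijective.sum_comp hrevbij (fun j => b j.succ)
    have hsum2 : ∑ i : Fin (d+1), b i = b 0 + ∑ i : Fin d, b i.succ := Fin.sum_univ_succ b
    have hsum3 : ∑ i : Fin d, (a i + b i.rev.succ) ≤ d * (d+1) := by
      calc ∑ i : Fin d, (a i + b i.rev.succ) ≤ ∑ _i : Fin d, (d+1) :=
            Finset.sum_le_sum (fun i _ => by rw [← hbrev i]; exact key i)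
        _ = d * (d+1) := by simp [Finset.sum_const, Finset.card_univ, mul_comm]
    have hsplit : ∑ i : Fin d, (a i + b i.rev.succ) = (∑ i : Fin d, a i) + ∑ i : Fin d, b i.succ := by
      rw [Finset.sum_add_distrib, hsum1]
    have hmul : d * (d + 2) = d * (d + 1) + d := by ring
    have hb0 : b 0 = d := by
      have h1 := hbbd 0
      omega
    have heach : ∀ i : Fin d, a i + b i.rev.succ = d + 1 := by
      by_contra hc
      push_neg at hc
      obtain ⟨i0, hi0⟩ := hc
      have hlt : ∑ i : Fin d, (a i + b i.rev.succ) < ∑ _i : Fin d, (d+1) := by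
        refine Finset.sum_lt_sum (fun i _ => by rw [← hbrev i]; exact key i) ⟨i0, Finset.mem_univ _, ?_⟩
        exact lt_of_le_of_ne (by rw [← hbrev i0]; exact key i0) hi0
      have hconst : ∑ _i : Fin d, (d+1) = d * (d+1) := by
        simp [Finset.sum_const, Finset.card_univ, mul_comm]
      omega
    refine ⟨hb0, ?_⟩
    intro j hj
    have hjd : j.val ≤ d := by omega
    have hlt : d - j.val < d := by omega
    have hkey := heach ⟨d - j.val, hlt⟩
    have hidx : (⟨d - j.val, hlt⟩ : Fin d).rev.succ = j := by
      apply Fin.ext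
      simp [Fin.val_rev]
      omega
    rw [hidx] at hkey
    have := habd ⟨d - j.val, hlt⟩
    omega

  refine ⟨⟨hforward, fun h => ?_⟩, hsingle⟩
  rw [hsingle h]
  exact Set.singleton_nonempty _
end

section
/- Let d ≥ 1 and let V be a nondegenerate k/κ-hermitian space of dimension 2d+1. Let W' ⊆ V be a special subspace of codimension d−1 (so dim W' = d+2 and dim W'⊥ = d−1), and equip W'/W'⊥ (a nondegenerate hermitian space of dimension 3) with the induced hermitian form h̄ satisfying h̄(π(x),π(y)) = (x,y), where π : W' → W'/W'⊥ is the quotient map. Then the number of isotropic lines L ⊆ V with L ⊆ W' and L ⊄ W'⊥ equals q^{2(d−1)} times the number of isotropic lines of (W'/W'⊥, h̄). -/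
open Module

variable {k : Type*} [Field k] {V : Type*} [AddCommGroup V] [Module k V]

lemma span_singleton_isotropic {k V : Type*} [Field k] [AddCommGroup V] [Module k V]
    {σ : k →+* k} (h : V →ₗ[k] V →ₛₗ[σ] k) (z : V) (hz : h z z = 0) :
    ∀ x ∈ Submodule.span k {z}, ∀ y ∈ Submodule.span k {z}, h x y = 0 := by
  intro x hx y hy
  obtain ⟨a, rfl⟩ := Submodule.mem_span_singleton.mp hx
  obtain ⟨b, rfl⟩ := Submodule.mem_span_singleton.mp hy
  rw [map_smul h a z, LinearMap.smul_apply, (h z).map_smulₛₗ, hz]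
  simp

theorem card_perp (q d : ℕ) (hd : 1 ≤ d)
    [Fintype k] (hcard : Fintype.card k = q ^ 2)
    [FiniteDimensional k V] (hdim : finrank k V = 2 * d + 1)
    (σ : k →+* k)
    (h : V →ₗ[k] V →ₛₗ[σ] k)
    (hherm : ∀ x y : V, h x y = σ (h y x))
    (hnd : ∀ x : V, (∀ y : V, h x y = 0) → x = 0)
    (W' : Submodule k V) (hW'dim : finrank k W' = d + 2) :
    Nat.card (perp h W') = q ^ (2 * (d - 1)) := by
  classical
  haveI : Finite V := Module.finite_of_finite k
  haveI : Finite (Module.Dual k V) := Module.finite_of_finite k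
  haveI : Finite (Module.Dual k W') := Module.finite_of_finite k
  letI : Fintype V := Fintype.ofFinite V
  letI : Fintype (Module.Dual k V) := Fintype.ofFinite _
  letI : Fintype (Module.Dual k W') := Fintype.ofFinite _
  have hq : 0 < q := by
    rcases Nat.eq_zero_or_pos q with h0 | h0
    · exfalso; have := Fintype.card_pos (α := k); rw [hcard, h0] at this; simp at this
    · exact h0
  have hright : ∀ x : V, (∀ y : V, h y x = 0) → x = 0 := by
    intro x hx
    exact hnd x fun y => by rw [hherm, hx y, map_zero]
  -- χ : V → Dual V, injective hence surjective
  have hχinj : Function.Injective fun x : V => h.flip x := by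
    intro x₁ x₂ hx
    have h1 : ∀ y : V, h y x₁ = h y x₂ := fun y => congrFun (congrArg DFunLike.coe hx) y
    have h0 : ∀ y : V, h y (x₁ - x₂) = 0 := by
      intro y; rw [map_sub, h1 y, sub_self]
    exact sub_eq_zero.mp (hright _ h0)
  have hcards : Fintype.card V = Fintype.card (Module.Dual k V) := by
    rw [card_eq_pow_finrank (K := k) (V := V),
      card_eq_pow_finrank (K := k) (V := Module.Dual k V), Subspace.dual_finrank_eq]
  have hχsurj : Function.Surjective fun x : V => h.flip x :=
    ((Fintype.bijective_iff_injective_and_card _).mpr ⟨hχinj, hcards⟩).surjective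
  -- φ : V →+ Dual W'
  let φ : V →+ Module.Dual k W' :=
    AddMonoidHom.mk' (fun x => (h.flip x).comp W'.subtype)
      (fun x y => by ext u; simp)
  have hφsurj : Function.Surjective φ := by
    obtain ⟨C, hC⟩ := Submodule.exists_isCompl W'
    intro f
    obtain ⟨x, hx⟩ := hχsurj (f.comp (W'.projectionOnto C hC))
    refine ⟨x, ?_⟩
    ext u
    have : h.flip x = f.comp (W'.projectionOnto C hC) := hx
    simp only [φ, AddMonoidHom.mk'_apply, LinearMap.comp_apply, this]
    simp [Submodule.projectionOnto_apply_left hC u]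
  have hker : ∀ x : V, x ∈ φ.ker ↔ x ∈ perp h W' := by
    intro x
    rw [AddMonoidHom.mem_ker]
    constructor
    · intro h0 u hu
      have : h (⟨u, hu⟩ : W') x = 0 := congrFun (congrArg DFunLike.coe h0) ⟨u, hu⟩
      rw [hherm, this, map_zero]
    · intro hx
      ext u
      have : h x u = 0 := hx u u.2
      have h2 : σ (h (u : V) x) = 0 := by rw [← hherm]; exact this
      have h3 : h (u : V) x = 0 := by
        by_contra hne
        exact hne (σ.injective (by rwa [map_zero]))
      simpa [φ] using h3
  have hlag : Nat.card V = Nat.card (Module.Dual k W') * Nat.card φ.ker := by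
    rw [AddSubgroup.card_eq_card_quotient_mul_card_addSubgroup φ.ker]
    congr 1
    exact Nat.card_congr (QuotientAddGroup.quotientKerEquivOfSurjective φ hφsurj).toEquiv
  have hcardker : Nat.card φ.ker = Nat.card (perp h W') :=
    Nat.card_congr (Equiv.subtypeEquivRight hker)
  have hcV : Nat.card V = (q ^ 2) ^ (2 * d + 1) := by
    rw [Nat.card_eq_fintype_card, card_eq_pow_finrank (K := k) (V := V), hdim, hcard]
  have hcD : Nat.card (Module.Dual k W') = (q ^ 2) ^ (d + 2) := by
    rw [Nat.card_eq_fintype_card, card_eq_pow_finrank (K := k),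
      Subspace.dual_finrank_eq, hW'dim, hcard]
  rw [hcardker, hcV, hcD] at hlag
  have hsplit : (q ^ 2) ^ (2 * d + 1) = (q ^ 2) ^ (d + 2) * (q ^ 2) ^ (d - 1) := by
    rw [← pow_add]
    congr 1
    omega
  rw [hsplit] at hlag
  have := Nat.eq_of_mul_eq_mul_left (pow_pos (pow_pos hq 2) (d + 2)) hlag
  rw [← this, ← pow_mul]

/-- Let `V` be a nondegenerate `k/κ`-hermitian space of dimension `2d+1`
and `W' ⊆ V` a special subspace of codimension `d-1`, with induced hermitian form `h̄` on
the 3-dimensional quotient `W'/W'⊥`. The number of isotropic lines `L ⊆ W'` with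
`L ⊄ W'⊥` equals `q^{2(d-1)}` times the number of isotropic lines of `(W'/W'⊥, h̄)`. -/
theorem card_isotropic_lines_in_special (q d : ℕ) (hd : 1 ≤ d)
    [Fintype k] (hcard : Fintype.card k = q ^ 2)
    [FiniteDimensional k V] (hdim : finrank k V = 2 * d + 1)
    (σ : k →+* k) (hσ : ∀ x : k, σ x = x ^ q)
    (h : V →ₗ[k] V →ₛₗ[σ] k)
    (hherm : ∀ x y : V, h x y = σ (h y x))
    (hnd : ∀ x : V, (∀ y : V, h x y = 0) → x = 0)
    (W' : Submodule k V) (hW' : perp h W' ≤ W') (hW'dim : finrank k W' = d + 2)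
    (hb : (W' ⧸ (perp h W').comap W'.subtype) →ₗ[k]
          (W' ⧸ (perp h W').comap W'.subtype) →ₛₗ[σ] k)
    (hbcompat : ∀ x y : W',
      hb (Submodule.Quotient.mk x) (Submodule.Quotient.mk y) = h (x : V) (y : V)) :
    Nat.card {L : Submodule k V | finrank k L = 1 ∧ (∀ x ∈ L, ∀ y ∈ L, h x y = 0) ∧
        L ≤ W' ∧ ¬ L ≤ perp h W'} =
      q ^ (2 * (d - 1)) *
        Nat.card {L : Submodule k (W' ⧸ (perp h W').comap W'.subtype) |
          finrank k L = 1 ∧ ∀ x ∈ L, ∀ y ∈ L, hb x y = 0} := by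
  classical
  set T : Set (Submodule k (W' ⧸ (perp h W').comap W'.subtype)) :=
    {L : Submodule k (W' ⧸ (perp h W').comap W'.subtype) |
      finrank k L = 1 ∧ ∀ x ∈ L, ∀ y ∈ L, hb x y = 0} with hTdef
  set S : Set (Submodule k V) :=
    {L : Submodule k V | finrank k L = 1 ∧ (∀ x ∈ L, ∀ y ∈ L, h x y = 0) ∧
      L ≤ W' ∧ ¬ L ≤ perp h W'} with hSdef
  -- generator and lift for each isotropic line of the quotient
  have hgen : ∀ L : ↥T, ∃ pp : (W' ⧸ (perp h W').comap W'.subtype) × W', pp.1 ≠ 0 ∧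
      Submodule.span k {pp.1} = (L : Submodule k (W' ⧸ (perp h W').comap W'.subtype)) ∧
      Submodule.Quotient.mk pp.2 = pp.1 := by
    rintro ⟨L, hL1, -⟩
    have hLbot : L ≠ ⊥ := by
      intro hbot
      rw [hbot, finrank_bot] at hL1
      omega
    obtain ⟨g, hgL, hg0⟩ := (Submodule.ne_bot_iff L).mp hLbot
    obtain ⟨v, hv⟩ := Submodule.Quotient.mk_surjective _ g
    refine ⟨(g, v), hg0, ?_, hv⟩
    apply Submodule.eq_of_le_of_finrank_eq
    · rw [Submodule.span_le, Set.singleton_subset_iff]; exact hgL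
    · rw [finrank_span_singleton hg0, hL1]
  choose p hp0 hpspan hplift using hgen
  have hmemH : ∀ x : V, x ∈ perp h W' → ∀ u ∈ W', h x u = 0 := fun x hx => hx
  have hiHN : ∀ w : ↥(perp h W'),
      (⟨(w : V), hW' w.2⟩ : W') ∈ (perp h W').comap W'.subtype := by
    intro w
    rw [Submodule.mem_comap]
    exact w.2
  -- the W'-level vector attached to (L, w)
  have hmkz : ∀ (L : ↥T) (w : ↥(perp h W')),
      (Submodule.Quotient.mk ((p L).2 + ⟨(w : V), hW' w.2⟩) :
        W' ⧸ (perp h W').comap W'.subtype) = (p L).1 := by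
    intro L w
    rw [Submodule.Quotient.mk_add, (Submodule.Quotient.mk_eq_zero _).mpr (hiHN w), add_zero]
    exact hplift L
  have hz0 : ∀ (L : ↥T) (w : ↥(perp h W')),
      (((p L).2 : V) + (w : V)) ≠ 0 := by
    intro L w hzero
    have h1 : (p L).2 + (⟨(w : V), hW' w.2⟩ : W') = 0 := Subtype.ext hzero
    apply hp0 L
    rw [← hmkz L w, h1, Submodule.Quotient.mk_zero]
  have hgmem : ∀ L : ↥T, (p L).1 ∈ (L : Submodule k (W' ⧸ (perp h W').comap W'.subtype)) := by
    intro L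
    rw [← hpspan L]
    exact Submodule.mem_span_singleton_self _
  have hzz0 : ∀ (L : ↥T) (w : ↥(perp h W')),
      h (((p L).2 : V) + (w : V)) (((p L).2 : V) + (w : V)) = 0 := by
    intro L w
    have hvv0 : h ((p L).2 : V) ((p L).2 : V) = 0 := by
      rw [← hbcompat, hplift L]
      exact L.2.2 _ (hgmem L) _ (hgmem L)
    have hwv : h (w : V) ((p L).2 : V) = 0 := hmemH _ w.2 _ (p L).2.2
    have hww : h (w : V) (w : V) = 0 := hmemH _ w.2 _ (hW' w.2)
    have hvw : h ((p L).2 : V) (w : V) = 0 := by rw [hherm, hwv, map_zero]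
    simp only [map_add, LinearMap.add_apply, hvv0, hwv, hww, hvw, add_zero, zero_add]
  -- membership of image lines
  have hGmem : ∀ (L : ↥T) (w : ↥(perp h W')),
      Submodule.span k {((p L).2 : V) + (w : V)} ∈ S := by
    intro L w
    refine ⟨finrank_span_singleton (hz0 L w), span_singleton_isotropic h _ (hzz0 L w), ?_, ?_⟩
    · rw [Submodule.span_le, Set.singleton_subset_iff]
      exact W'.add_mem (p L).2.2 (hW' w.2)
    · intro hle
      have hm : ((p L).2 : V) + (w : V) ∈ perp h W' :=
        hle (Submodule.mem_span_singleton_self _)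
      have hmN : (p L).2 + (⟨(w : V), hW' w.2⟩ : W') ∈ (perp h W').comap W'.subtype := by
        rw [Submodule.mem_comap]
        exact hm
      apply hp0 L
      rw [← hmkz L w, (Submodule.Quotient.mk_eq_zero _).mpr hmN]
  -- the map
  set G : ↥T × ↥(perp h W') → ↥S :=
    fun P => ⟨Submodule.span k {((p P.1).2 : V) + (P.2 : V)}, hGmem P.1 P.2⟩ with hGdef
  have hGinj : Function.Injective G := by
    rintro ⟨L₁, w₁⟩ ⟨L₂, w₂⟩ heq
    have hsp : Submodule.span k {((p L₁).2 : V) + (w₁ : V)} =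
        Submodule.span k {((p L₂).2 : V) + (w₂ : V)} := congrArg Subtype.val heq
    have hz1 : ((p L₁).2 : V) + (w₁ : V) ∈
        Submodule.span k {((p L₂).2 : V) + (w₂ : V)} := by
      rw [← hsp]
      exact Submodule.mem_span_singleton_self _
    obtain ⟨c, hc⟩ := Submodule.mem_span_singleton.mp hz1
    have hc0 : c ≠ 0 := by
      rintro rfl
      rw [zero_smul] at hc
      exact hz0 L₁ w₁ hc.symm
    have hzW : (p L₁).2 + (⟨(w₁ : V), hW' w₁.2⟩ : W') =
        c • ((p L₂).2 + (⟨(w₂ : V), hW' w₂.2⟩ : W')) := by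
      apply Subtype.ext
      push_cast
      exact hc.symm
    have hgc : (p L₁).1 = c • (p L₂).1 := by
      rw [← hmkz L₁ w₁, hzW, Submodule.Quotient.mk_smul, hmkz L₂ w₂]
    have hLL : L₁ = L₂ := by
      apply Subtype.ext
      rw [← hpspan L₁, ← hpspan L₂, hgc,
        Submodule.span_singleton_smul_eq (isUnit_iff_ne_zero.mpr hc0)]
    subst hLL
    have hc1 : c = 1 := by
      have h1 : (c - 1) • (p L₁).1 = 0 := by
        rw [sub_smul, one_smul, ← hgc, sub_self]
      have h2 := (smul_eq_zero.mp h1).resolve_right (hp0 L₁)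
      exact sub_eq_zero.mp h2
    subst hc1
    rw [one_smul] at hc
    have hw : w₁ = w₂ := by
      apply Subtype.ext
      have := hc
      rw [add_right_inj] at this
      exact this.symm
    rw [hw]
  have hGsurj : Function.Surjective G := by
    rintro ⟨L, hL⟩
    obtain ⟨hL1, hL2, hL3, hL4⟩ := hL
    obtain ⟨x, hxL, hxH⟩ := SetLike.not_le_iff_exists.mp hL4
    have hx0 : x ≠ 0 := fun h0 => hxH (h0 ▸ (perp h W').zero_mem)
    have hxW : x ∈ W' := hL3 hxL
    have hmkx : (Submodule.Quotient.mk (⟨x, hxW⟩ : W') :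
        W' ⧸ (perp h W').comap W'.subtype) ≠ 0 := by
      intro h0
      apply hxH
      have := (Submodule.Quotient.mk_eq_zero _).mp h0
      rw [Submodule.mem_comap] at this
      exact this
    have hTmem : Submodule.span k {(Submodule.Quotient.mk (⟨x, hxW⟩ : W') :
        W' ⧸ (perp h W').comap W'.subtype)} ∈ T := by
      refine ⟨finrank_span_singleton hmkx, span_singleton_isotropic hb _ ?_⟩
      rw [hbcompat]
      exact hL2 x hxL x hxL
    set Lt : ↥T := ⟨_, hTmem⟩ with hLtdef
    have hmem : (Submodule.Quotient.mk (⟨x, hxW⟩ : W') :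
        W' ⧸ (perp h W').comap W'.subtype) ∈ Submodule.span k {(p Lt).1} := by
      rw [hpspan Lt]
      exact Submodule.mem_span_singleton_self _
    obtain ⟨a, ha⟩ := Submodule.mem_span_singleton.mp hmem
    have ha0 : a ≠ 0 := by
      rintro rfl
      rw [zero_smul] at ha
      exact hmkx ha.symm
    have hwN : a⁻¹ • (⟨x, hxW⟩ : W') - (p Lt).2 ∈ (perp h W').comap W'.subtype := by
      rw [← Submodule.Quotient.mk_eq_zero, Submodule.Quotient.mk_sub,
        Submodule.Quotient.mk_smul, hplift Lt, ← ha, smul_smul, inv_mul_cancel₀ ha0,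
        one_smul, sub_self]
    have hwH : a⁻¹ • x - ((p Lt).2 : V) ∈ perp h W' := by
      rw [Submodule.mem_comap] at hwN
      simpa using hwN
    refine ⟨(Lt, ⟨a⁻¹ • x - ((p Lt).2 : V), hwH⟩), ?_⟩
    apply Subtype.ext
    show Submodule.span k {((p Lt).2 : V) + (a⁻¹ • x - ((p Lt).2 : V))} = L
    rw [add_sub_cancel]
    rw [Submodule.span_singleton_smul_eq (isUnit_iff_ne_zero.mpr (inv_ne_zero ha0))]
    apply Submodule.eq_of_le_of_finrank_eq
    · rw [Submodule.span_le, Set.singleton_subset_iff]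
      exact hxL
    · rw [finrank_span_singleton hx0, hL1]
  have hcards : Nat.card ↥S = Nat.card ↥T * Nat.card ↥(perp h W') := by
    rw [← Nat.card_congr (Equiv.ofBijective G ⟨hGinj, hGsurj⟩), Nat.card_prod]
  rw [hcards, card_perp q d hd hcard hdim σ h hherm hnd W' hW'dim, mul_comm]
end
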